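/- Let n ≥ 2 and let O be the orbifold on ℂP¹ with ν(0) = n, ν(∞) = n, and ν(z) = 1 for all other z. A non-constant rational function A is a minimal holomorphic map A: O → O between orbifolds if and only if A(z) = z^r·R(z)^n for some rational function R ∈ ℂ(z) and some integer r with 1 ≤ r ≤ n−1 and gcd(r,n) = 1. -/

import Mathlib

open Polynomial OnePoint
open scoped Classical

noncomputable section

/-- The Riemann sphere, modeled as the one-point compactification of `ℂ`. -/
abbrev CP1 := OnePoint ℂ

namespace Pk

/-- The degree of a rational function. -/
def deg (f : RatFunc ℂ) : ℕ := max f.num.natDegree f.denom.natDegree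

/-- Composition `f ∘ g` of rational functions. -/
def comp (f g : RatFunc ℂ) : RatFunc ℂ :=
  RatFunc.eval (algebraMap ℂ (RatFunc ℂ)) g f

/-- The `k`-th iterate `f^{∘k}` of a rational function (with `f^{∘0} = z`). -/
def iter (f : RatFunc ℂ) : ℕ → RatFunc ℂ
  | 0 => RatFunc.X
  | k + 1 => comp f (iter f k)

/-- The value of a rational function at the point at infinity. -/
def evalInf (f : RatFunc ℂ) : CP1 :=
  if f.denom.natDegree < f.num.natDegree then ∞
  else OnePoint.some (if f.num.natDegree = f.denom.natDegree
    then f.num.leadingCoeff / f.denom.leadingCoeff else 0)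

/-- The self-map of the Riemann sphere induced by a rational function. -/
def fmap (f : RatFunc ℂ) : CP1 → CP1 := fun p =>
  match p with
  | ∞ => evalInf f
  | OnePoint.some z =>
      if f.denom.eval z = 0 then ∞
      else OnePoint.some (f.num.eval z / f.denom.eval z)

/-- The local degree (multiplicity) of a rational function at a finite point. -/
def locDegFin (f : RatFunc ℂ) (a : ℂ) : ℕ :=
  if f.denom.eval a = 0 then f.denom.rootMultiplicity a
  else (f.num - Polynomial.C (f.num.eval a / f.denom.eval a) * f.denom).rootMultiplicity a

/-- The local degree (multiplicity) `deg_z f` of a rational function at a point of `ℂP¹`. -/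
def locDeg (f : RatFunc ℂ) : CP1 → ℕ := fun p =>
  match p with
  | ∞ => locDegFin (comp (RatFunc.X)⁻¹ (comp f (RatFunc.X)⁻¹)) 0
  | OnePoint.some z => locDegFin f z

/-- A ramification function on `ℂP¹` defining an orbifold: it is everywhere positive and
takes the value `1` outside a finite set. -/
def IsOrbifoldRam (ν : CP1 → ℕ) : Prop := (∀ z, 1 ≤ ν z) ∧ {z | ν z ≠ 1}.Finite

/-- An orbifold on the Riemann sphere. -/
structure Orbifold where
  nu : CP1 → ℕ
  one_le : ∀ z, 1 ≤ nu z
  finite : {z | nu z ≠ 1}.Finite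

/-- The Euler characteristic `χ` of an orbifold given by a ramification function,
`χ(O) = 2 + ∑ (1/ν(z) - 1)`. -/
def chiNu (ν : CP1 → ℕ) : ℚ :=
  if h : {z | ν z ≠ 1}.Finite then 2 + ∑ z ∈ h.toFinset, ((ν z : ℚ)⁻¹ - 1) else 0

/-- The collection (multiset) `ν(O)` of ramification indices of an orbifold. -/
def ramNu (ν : CP1 → ℕ) : Multiset ℕ :=
  if h : {z | ν z ≠ 1}.Finite then h.toFinset.val.map ν else 0

/-- `f : O₁ → O₂` is a covering map between orbifolds: `ν₂(f(z)) = ν₁(z)·deg_z f`. -/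
def IsCoveringBetween (f : RatFunc ℂ) (ν₁ ν₂ : CP1 → ℕ) : Prop :=
  ∀ z, ν₂ (fmap f z) = ν₁ z * locDeg f z

/-- `f : O₁ → O₂` is a holomorphic map between orbifolds: `ν₂(f(z)) ∣ ν₁(z)·deg_z f`. -/
def IsHoloBetween (f : RatFunc ℂ) (ν₁ ν₂ : CP1 → ℕ) : Prop :=
  ∀ z, ν₂ (fmap f z) ∣ ν₁ z * locDeg f z

/-- `f : O₁ → O₂` is a minimal holomorphic map between orbifolds:
`ν₂(f(z)) = ν₁(z)·gcd(deg_z f, ν₂(f(z)))`. -/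
def IsMinHoloBetween (f : RatFunc ℂ) (ν₁ ν₂ : CP1 → ℕ) : Prop :=
  ∀ z, ν₂ (fmap f z) = ν₁ z * Nat.gcd (locDeg f z) (ν₂ (fmap f z))

/-- The ramification function `ν₂^f` of the orbifold `O₂^f`: the lcm of the local degrees
of `f` over the fiber `f⁻¹(z)`. -/
def nu2 (f : RatFunc ℂ) (z : CP1) : ℕ :=
  if h : (fmap f ⁻¹' {z}).Finite then h.toFinset.lcm (locDeg f) else 1

/-- The ramification function of the pullback orbifold `f*O`. -/
def pullNu (f : RatFunc ℂ) (ν : CP1 → ℕ) (z : CP1) : ℕ :=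
  ν (fmap f z) / Nat.gcd (locDeg f z) (ν (fmap f z))

/-- A Möbius transformation is a rational function of degree one. -/
def IsMobius (μ : RatFunc ℂ) : Prop := deg μ = 1

/-- `μ` and `μ'` are mutually inverse Möbius transformations. -/
def MobiusInv (μ μ' : RatFunc ℂ) : Prop :=
  IsMobius μ ∧ IsMobius μ' ∧ comp μ μ' = RatFunc.X ∧ comp μ' μ = RatFunc.X

/-- `f` is conjugate to `g`: `f = μ∘g∘μ⁻¹` for a Möbius transformation `μ`. -/
def IsConjTo (f g : RatFunc ℂ) : Prop :=
  ∃ μ μ', MobiusInv μ μ' ∧ f = comp (comp μ g) μ'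

/-- `f` is μ-equivalent to `g`: `f = μ₁∘g∘μ₂` for Möbius transformations `μ₁, μ₂`. -/
def MuEquiv (f g : RatFunc ℂ) : Prop :=
  ∃ μ₁ μ₂, IsMobius μ₁ ∧ IsMobius μ₂ ∧ f = comp (comp μ₁ g) μ₂

/-- The power function `z^n`, `n ∈ ℤ`, as a rational function. -/
def zPow (n : ℤ) : RatFunc ℂ := RatFunc.X ^ n

/-- The degree-`n` Chebyshev polynomial `T_n` as a rational function. -/
def cheb (n : ℕ) : RatFunc ℂ :=
  algebraMap (Polynomial ℂ) (RatFunc ℂ) (Polynomial.Chebyshev.T ℂ n)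

/-- The rational function `½(z^n + z^{-n})`. -/
def half (n : ℕ) : RatFunc ℂ :=
  RatFunc.C (2 : ℂ)⁻¹ * (RatFunc.X ^ (n : ℤ) + RatFunc.X ^ (-(n : ℤ)))

/-- `f` is conjugate to `z^n` or to `z^{-n}`. -/
def ConjZPow (f : RatFunc ℂ) (n : ℕ) : Prop :=
  IsConjTo f (zPow n) ∨ IsConjTo f (zPow (-(n : ℤ)))

/-- `f` is conjugate to `T_n` or to `-T_n`. -/
def ConjChebPM (f : RatFunc ℂ) (n : ℕ) : Prop :=
  IsConjTo f (cheb n) ∨ IsConjTo f (-(cheb n))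

/-- A Lattès function: a rational function of degree at least two which is a covering
self-map `O → O` for some orbifold `O` on `ℂP¹`. -/
def IsLattes (f : RatFunc ℂ) : Prop :=
  2 ≤ deg f ∧ ∃ ν : CP1 → ℕ, IsOrbifoldRam ν ∧ IsCoveringBetween f ν ν

/-- A special rational function: a Lattès function, or a function conjugate to `z^{±n}`
or to `±T_n`. -/
def IsSpecial (f : RatFunc ℂ) : Prop :=
  IsLattes f ∨ ∃ n : ℕ, 2 ≤ n ∧ (ConjZPow f n ∨ ConjChebPM f n)

/-- `C` and `B` have no common compositional right factor of degree greater than one. -/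
def NoCommonRightFactor (C B : RatFunc ℂ) : Prop :=
  ∀ W p q : RatFunc ℂ, 2 ≤ deg W → C = comp p W → B = comp q W → False

/-- The bivariate polynomial whose zero set is the curve `A(x) - D(y) = 0`. -/
def curvePoly (A D : RatFunc ℂ) : MvPolynomial (Fin 2) ℂ :=
  Polynomial.aeval (MvPolynomial.X 0) A.num * Polynomial.aeval (MvPolynomial.X 1) D.denom -
    Polynomial.aeval (MvPolynomial.X 1) D.num * Polynomial.aeval (MvPolynomial.X 0) A.denom

/-- `A, C, D, B` form a good solution of `A∘C = D∘B`: all have degree at least two, the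
equation holds, the curve `A(x) - D(y) = 0` is irreducible, and `C, B` have no common
compositional right factor of degree greater than one. -/
def GoodSolution (A C D B : RatFunc ℂ) : Prop :=
  2 ≤ deg A ∧ 2 ≤ deg C ∧ 2 ≤ deg D ∧ 2 ≤ deg B ∧
    comp A C = comp D B ∧ Irreducible (curvePoly A D) ∧ NoCommonRightFactor C B

/-- A chain of length `s ≥ 2` and degree `d`: sequences `U_i, V_i` (`0 ≤ i < s`) of rational
functions of degree at least two with `U_i∘V_i = V_{i+1}∘U_{i+1}` and `deg (U_i∘V_i) = d`. -/
structure Chain (s d : ℕ) where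
  U : ℕ → RatFunc ℂ
  V : ℕ → RatFunc ℂ
  two_le_len : 2 ≤ s
  degU : ∀ i < s, 2 ≤ deg (U i)
  degV : ∀ i < s, 2 ≤ deg (V i)
  degF : ∀ i < s, deg (comp (U i) (V i)) = d
  eqs : ∀ i, i + 1 < s → comp (U i) (V i) = comp (V (i + 1)) (U (i + 1))

/-- The basis `F = V₁∘U₁` of a chain. -/
def Chain.basis {s d : ℕ} (c : Chain s d) : RatFunc ℂ := comp (c.V 0) (c.U 0)

/-- A good chain: each of its equalities is a good solution of `A∘C = D∘B`. -/
def Chain.IsGood {s d : ℕ} (c : Chain s d) : Prop :=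
  ∀ i, i + 1 < s → GoodSolution (c.U i) (c.V i) (c.V (i + 1)) (c.U (i + 1))

/-- A stable chain: a good chain with `ν(O₂^{U_1}) = ⋯ = ν(O₂^{U_s})` and
`ν(O₂^{V_1}) = ⋯ = ν(O₂^{V_s})`. -/
def Chain.IsStable {s d : ℕ} (c : Chain s d) : Prop :=
  c.IsGood ∧ (∀ i < s, ramNu (nu2 (c.U i)) = ramNu (nu2 (c.U 0))) ∧
    (∀ i < s, ramNu (nu2 (c.V i)) = ramNu (nu2 (c.V 0)))

/-- An elementary transformation: `f = U∘V ↦ g = V∘U`. -/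
def ElemTrans (f g : RatFunc ℂ) : Prop :=
  ∃ u v : RatFunc ℂ, 1 ≤ deg u ∧ 1 ≤ deg v ∧ f = comp u v ∧ g = comp v u

/-- The equivalence `f ∼ g`: a finite chain of elementary transformations from `f` to `g`. -/
def SimRel : RatFunc ℂ → RatFunc ℂ → Prop := Relation.ReflTransGen ElemTrans

/-- The function `θ(d)` equal to `log₂(84(d-4))` for `d > 4` and to `1` for `d ≤ 4`. -/
def thetaFn (d : ℕ) : ℝ := if 4 < d then Real.logb 2 (84 * ((d : ℝ) - 4)) else 1

end Pk

open Pk RatFunc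

namespace Aux8

/-- Order of vanishing of a rational function at a finite point. -/
def ordAt (a : ℂ) (f : RatFunc ℂ) : ℤ :=
  (f.num.rootMultiplicity a : ℤ) - f.denom.rootMultiplicity a

/-- Order of vanishing at infinity. -/
def ordInf (f : RatFunc ℂ) : ℤ :=
  (f.denom.natDegree : ℤ) - f.num.natDegree

theorem ordAt_mul (a : ℂ) {f g : RatFunc ℂ} (hf : f ≠ 0) (hg : g ≠ 0) :
    ordAt a (f * g) = ordAt a f + ordAt a g := by
  have key := RatFunc.num_denom_mul f g
  have h1 := congrArg (Polynomial.rootMultiplicity a) key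
  have hfg : f * g ≠ 0 := mul_ne_zero hf hg
  rw [Polynomial.rootMultiplicity_mul (mul_ne_zero (num_ne_zero hfg)
        (mul_ne_zero (denom_ne_zero f) (denom_ne_zero g))),
      Polynomial.rootMultiplicity_mul (mul_ne_zero
        (mul_ne_zero (num_ne_zero hf) (num_ne_zero hg)) (denom_ne_zero (f*g))),
      Polynomial.rootMultiplicity_mul (mul_ne_zero (denom_ne_zero f) (denom_ne_zero g)),
      Polynomial.rootMultiplicity_mul (mul_ne_zero (num_ne_zero hf) (num_ne_zero hg))] at h1
  unfold ordAt
  omega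

theorem ordInf_mul {f g : RatFunc ℂ} (hf : f ≠ 0) (hg : g ≠ 0) :
    ordInf (f * g) = ordInf f + ordInf g := by
  have key := RatFunc.num_denom_mul f g
  have h1 := congrArg Polynomial.natDegree key
  have hfg : f * g ≠ 0 := mul_ne_zero hf hg
  rw [Polynomial.natDegree_mul (num_ne_zero hfg)
        (mul_ne_zero (denom_ne_zero f) (denom_ne_zero g)),
      Polynomial.natDegree_mul (mul_ne_zero (num_ne_zero hf) (num_ne_zero hg))
        (denom_ne_zero (f*g)),
      Polynomial.natDegree_mul (denom_ne_zero f) (denom_ne_zero g),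
      Polynomial.natDegree_mul (num_ne_zero hf) (num_ne_zero hg)] at h1
  unfold ordInf
  omega

@[simp] theorem ordAt_one (a : ℂ) : ordAt a (1 : RatFunc ℂ) = 0 := by
  simp [ordAt]

@[simp] theorem ordInf_one : ordInf (1 : RatFunc ℂ) = 0 := by
  simp [ordInf]

theorem ordAt_inv (a : ℂ) {f : RatFunc ℂ} (hf : f ≠ 0) : ordAt a f⁻¹ = -ordAt a f := by
  have := ordAt_mul a hf (inv_ne_zero hf)
  rw [mul_inv_cancel₀ hf, ordAt_one] at this
  omega

theorem ordInf_inv {f : RatFunc ℂ} (hf : f ≠ 0) : ordInf f⁻¹ = -ordInf f := by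
  have := ordInf_mul hf (inv_ne_zero hf)
  rw [mul_inv_cancel₀ hf, ordInf_one] at this
  omega

theorem ordAt_pow (a : ℂ) {f : RatFunc ℂ} (hf : f ≠ 0) (k : ℕ) :
    ordAt a (f ^ k) = k * ordAt a f := by
  induction k with
  | zero => simp
  | succ k ih =>
      rw [pow_succ, ordAt_mul a (pow_ne_zero _ hf) hf, ih]
      push_cast; ring

theorem ordInf_pow {f : RatFunc ℂ} (hf : f ≠ 0) (k : ℕ) :
    ordInf (f ^ k) = k * ordInf f := by
  induction k with
  | zero => simp
  | succ k ih =>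
      rw [pow_succ, ordInf_mul (pow_ne_zero _ hf) hf, ih]
      push_cast; ring

theorem ordAt_zpow (a : ℂ) {f : RatFunc ℂ} (hf : f ≠ 0) (k : ℤ) :
    ordAt a (f ^ k) = k * ordAt a f := by
  cases k with
  | ofNat k => simpa using ordAt_pow a hf k
  | negSucc k =>
      rw [zpow_negSucc, ordAt_inv a (pow_ne_zero _ hf), ordAt_pow a hf, Int.negSucc_eq]
      push_cast; ring

@[simp] theorem ordAt_algebraMap (a : ℂ) {p : Polynomial ℂ} (_hp : p ≠ 0) :
    ordAt a (algebraMap (Polynomial ℂ) (RatFunc ℂ) p) = p.rootMultiplicity a := by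
  simp [ordAt]

@[simp] theorem ordAt_X (a : ℂ) : ordAt a (RatFunc.X : RatFunc ℂ) = if a = 0 then 1 else 0 := by
  rw [show (RatFunc.X : RatFunc ℂ) = algebraMap (Polynomial ℂ) (RatFunc ℂ) Polynomial.X from rfl,
    ordAt_algebraMap a Polynomial.X_ne_zero]
  rcases eq_or_ne a 0 with rfl | ha
  · norm_cast
    rw [if_pos rfl, show (Polynomial.X : Polynomial ℂ) = Polynomial.X - Polynomial.C 0 by simp,
      Polynomial.rootMultiplicity_X_sub_C_self]
  · rw [if_neg ha]
    norm_cast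
    rw [Polynomial.rootMultiplicity_eq_zero (by simp [Polynomial.IsRoot, ha])]

@[simp] theorem ordAt_C (a : ℂ) {c : ℂ} (hc : c ≠ 0) : ordAt a (RatFunc.C c) = 0 := by
  rw [show (RatFunc.C c : RatFunc ℂ) = algebraMap (Polynomial ℂ) (RatFunc ℂ) (Polynomial.C c)
      from rfl, ordAt_algebraMap a (by simpa using hc)]
  norm_cast
  rw [Polynomial.rootMultiplicity_eq_zero (by simp [Polynomial.IsRoot, hc])]

theorem not_both_eval_zero {f : RatFunc ℂ} (a : ℂ) :
    ¬(f.num.eval a = 0 ∧ f.denom.eval a = 0) := by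
  rintro ⟨h1, h2⟩
  obtain ⟨u, v, huv⟩ := RatFunc.isCoprime_num_denom f
  have := congrArg (Polynomial.eval a) huv
  simp [h1, h2] at this

theorem denom_eval_zero_iff {f : RatFunc ℂ} (_hf : f ≠ 0) (a : ℂ) :
    f.denom.eval a = 0 ↔ ordAt a f < 0 := by
  unfold ordAt
  constructor
  · intro h
    have h2 : f.num.eval a ≠ 0 := fun hn => not_both_eval_zero a ⟨hn, h⟩
    have hd : 0 < f.denom.rootMultiplicity a :=
      (Polynomial.rootMultiplicity_pos (denom_ne_zero f)).2 h
    have hn : f.num.rootMultiplicity a = 0 := Polynomial.rootMultiplicity_eq_zero h2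
    omega
  · intro h
    by_contra hd
    have : f.denom.rootMultiplicity a = 0 := Polynomial.rootMultiplicity_eq_zero hd
    omega

theorem num_eval_zero_iff {f : RatFunc ℂ} (hf : f ≠ 0) (a : ℂ) :
    f.num.eval a = 0 ↔ 0 < ordAt a f := by
  unfold ordAt
  constructor
  · intro h
    have h2 : f.denom.eval a ≠ 0 := fun hn => not_both_eval_zero a ⟨h, hn⟩
    have hn : 0 < f.num.rootMultiplicity a :=
      (Polynomial.rootMultiplicity_pos (num_ne_zero hf)).2 h
    have hd : f.denom.rootMultiplicity a = 0 := Polynomial.rootMultiplicity_eq_zero h2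
    omega
  · intro h
    by_contra hn
    have : f.num.rootMultiplicity a = 0 := Polynomial.rootMultiplicity_eq_zero hn
    omega

theorem fmap_some (f : RatFunc ℂ) (a : ℂ) :
    fmap f (OnePoint.some a) =
      (if f.denom.eval a = 0 then ∞ else OnePoint.some (f.num.eval a / f.denom.eval a)) := rfl

theorem locDeg_some (f : RatFunc ℂ) (a : ℂ) :
    locDeg f (OnePoint.some a) = locDegFin f a := rfl

/-- Case `ordAt < 0` : pole. -/
theorem fmap_locDeg_of_neg {f : RatFunc ℂ} (hf : f ≠ 0) {a : ℂ} (h : ordAt a f < 0) :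
    fmap f (OnePoint.some a) = ∞ ∧ locDegFin f a = (-ordAt a f).toNat := by
  have hd : f.denom.eval a = 0 := (denom_eval_zero_iff hf a).2 h
  have h2 : f.num.eval a ≠ 0 := fun hn => not_both_eval_zero a ⟨hn, hd⟩
  have hn : f.num.rootMultiplicity a = 0 := Polynomial.rootMultiplicity_eq_zero h2
  constructor
  · rw [fmap_some, if_pos hd]
  · rw [locDegFin, if_pos hd]
    unfold ordAt
    omega

/-- Case `ordAt > 0` : zero. -/
theorem fmap_locDeg_of_pos {f : RatFunc ℂ} (hf : f ≠ 0) {a : ℂ} (h : 0 < ordAt a f) :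
    fmap f (OnePoint.some a) = OnePoint.some 0 ∧ locDegFin f a = (ordAt a f).toNat := by
  have hn : f.num.eval a = 0 := (num_eval_zero_iff hf a).2 h
  have hd : f.denom.eval a ≠ 0 := fun h2 => not_both_eval_zero a ⟨hn, h2⟩
  have hdm : f.denom.rootMultiplicity a = 0 := Polynomial.rootMultiplicity_eq_zero hd
  constructor
  · rw [fmap_some, if_neg hd, hn, zero_div]
  · rw [locDegFin, if_neg hd, hn, zero_div, map_zero, zero_mul, sub_zero]
    unfold ordAt
    omega

/-- Case `ordAt = 0` : regular nonzero value. -/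
theorem fmap_of_zero {f : RatFunc ℂ} (hf : f ≠ 0) {a : ℂ} (h : ordAt a f = 0) :
    ∃ c : ℂ, c ≠ 0 ∧ fmap f (OnePoint.some a) = OnePoint.some c := by
  have hn : f.num.eval a ≠ 0 := fun h2 => by
    have := (num_eval_zero_iff hf a).1 h2; omega
  have hd : f.denom.eval a ≠ 0 := fun h2 => by
    have := (denom_eval_zero_iff hf a).1 h2; omega
  exact ⟨_, div_ne_zero hn hd, by rw [fmap_some, if_neg hd]⟩

theorem num_Xinv : ((RatFunc.X : RatFunc ℂ)⁻¹).num = 1 := by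
  rw [show (RatFunc.X : RatFunc ℂ)⁻¹
      = algebraMap ℂ[X] _ (1:ℂ[X]) / algebraMap ℂ[X] _ Polynomial.X by
    rw [map_one, inv_eq_one_div]; rfl]
  rw [RatFunc.num_div]
  simp [EuclideanDomain.gcd]

theorem denom_Xinv : ((RatFunc.X : RatFunc ℂ)⁻¹).denom = Polynomial.X := by
  rw [show (RatFunc.X : RatFunc ℂ)⁻¹
      = algebraMap ℂ[X] _ (1:ℂ[X]) / algebraMap ℂ[X] _ Polynomial.X by
    rw [map_one, inv_eq_one_div]; rfl]
  rw [RatFunc.denom_div _ Polynomial.X_ne_zero]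
  simp [EuclideanDomain.gcd]

theorem comp_Xinv_left (g : RatFunc ℂ) : comp (RatFunc.X)⁻¹ g = g⁻¹ := by
  unfold Pk.comp RatFunc.eval
  rw [num_Xinv, denom_Xinv, Polynomial.eval₂_one, Polynomial.eval₂_X, one_div]

theorem eval₂_X_ratfunc (q : ℂ[X]) :
    Polynomial.eval₂ (algebraMap ℂ (RatFunc ℂ)) RatFunc.X q
      = algebraMap ℂ[X] (RatFunc ℂ) q := by
  rw [← Polynomial.aeval_def, show (RatFunc.X : RatFunc ℂ)
      = algebraMap ℂ[X] (RatFunc ℂ) Polynomial.X from rfl,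
    Polynomial.aeval_algebraMap_apply, Polynomial.aeval_X_left_apply]

theorem eval₂_Xinv (p : ℂ[X]) :
    Polynomial.eval₂ (algebraMap ℂ (RatFunc ℂ)) (RatFunc.X)⁻¹ p
      = algebraMap ℂ[X] (RatFunc ℂ) p.reverse * ((RatFunc.X)⁻¹) ^ p.natDegree := by
  letI : Invertible ((RatFunc.X : RatFunc ℂ)⁻¹) :=
    invertibleOfNonzero (inv_ne_zero RatFunc.X_ne_zero)
  have h := Polynomial.eval₂_reverse_mul_pow (algebraMap ℂ (RatFunc ℂ)) ((RatFunc.X)⁻¹) p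
  rw [invOf_eq_inv _, inv_inv, eval₂_X_ratfunc] at h
  exact h.symm

theorem ordAt_zero_algebraMap_reverse {p : ℂ[X]} (hp : p ≠ 0) :
    ordAt 0 (algebraMap ℂ[X] (RatFunc ℂ) p.reverse) = 0 := by
  rw [ordAt_algebraMap 0 (by simpa [Polynomial.reverse_eq_zero] using hp)]
  norm_cast
  rw [Polynomial.rootMultiplicity_eq_zero]
  simp only [Polynomial.IsRoot, ← Polynomial.coeff_zero_eq_eval_zero,
    Polynomial.coeff_zero_reverse]
  exact Polynomial.leadingCoeff_ne_zero.2 hp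

theorem compInf_spec {f : RatFunc ℂ} (hf : f ≠ 0) :
    comp (RatFunc.X)⁻¹ (comp f (RatFunc.X)⁻¹) ≠ 0 ∧
    ordAt 0 (comp (RatFunc.X)⁻¹ (comp f (RatFunc.X)⁻¹)) = -ordInf f := by
  have hXi : ((RatFunc.X : RatFunc ℂ)⁻¹) ≠ 0 := inv_ne_zero RatFunc.X_ne_zero
  have hnr : (algebraMap ℂ[X] (RatFunc ℂ)) f.num.reverse ≠ 0 :=
    RatFunc.algebraMap_ne_zero (by simpa [Polynomial.reverse_eq_zero] using num_ne_zero hf)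
  have hdr : (algebraMap ℂ[X] (RatFunc ℂ)) f.denom.reverse ≠ 0 :=
    RatFunc.algebraMap_ne_zero
      (by simpa [Polynomial.reverse_eq_zero] using denom_ne_zero f)
  have hcomp : comp f (RatFunc.X)⁻¹ =
      (algebraMap ℂ[X] (RatFunc ℂ) f.num.reverse * ((RatFunc.X)⁻¹) ^ f.num.natDegree) /
      (algebraMap ℂ[X] (RatFunc ℂ) f.denom.reverse * ((RatFunc.X)⁻¹) ^ f.denom.natDegree) := by
    unfold Pk.comp RatFunc.eval
    rw [eval₂_Xinv, eval₂_Xinv]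
  have h1 : comp f (RatFunc.X)⁻¹ ≠ 0 := by
    rw [hcomp]
    exact div_ne_zero (mul_ne_zero hnr (pow_ne_zero _ hXi))
      (mul_ne_zero hdr (pow_ne_zero _ hXi))
  rw [comp_Xinv_left]
  refine ⟨inv_ne_zero h1, ?_⟩
  rw [ordAt_inv 0 h1, hcomp, div_eq_mul_inv,
    ordAt_mul 0 (mul_ne_zero hnr (pow_ne_zero _ hXi))
      (inv_ne_zero (mul_ne_zero hdr (pow_ne_zero _ hXi))),
    ordAt_inv 0 (mul_ne_zero hdr (pow_ne_zero _ hXi)),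
    ordAt_mul 0 hnr (pow_ne_zero _ hXi), ordAt_mul 0 hdr (pow_ne_zero _ hXi),
    ordAt_pow 0 hXi, ordAt_pow 0 hXi, ordAt_inv 0 RatFunc.X_ne_zero,
    ordAt_zero_algebraMap_reverse (num_ne_zero hf),
    ordAt_zero_algebraMap_reverse (denom_ne_zero f), ordAt_X]
  norm_num [ordInf]
  ring

theorem fmap_infty (f : RatFunc ℂ) : fmap f ∞ = evalInf f := rfl

theorem locDeg_infty (f : RatFunc ℂ) :
    locDeg f ∞ = locDegFin (comp (RatFunc.X)⁻¹ (comp f (RatFunc.X)⁻¹)) 0 := rfl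

theorem evalInf_of_neg {f : RatFunc ℂ} (h : ordInf f < 0) : evalInf f = ∞ := by
  rw [evalInf, if_pos]
  unfold ordInf at h
  omega

theorem evalInf_of_pos {f : RatFunc ℂ} (h : 0 < ordInf f) : evalInf f = OnePoint.some 0 := by
  unfold ordInf at h
  rw [evalInf, if_neg (by omega), if_neg (by omega)]

theorem evalInf_of_zero {f : RatFunc ℂ} (hf : f ≠ 0) (h : ordInf f = 0) :
    ∃ c : ℂ, c ≠ 0 ∧ evalInf f = OnePoint.some c := by
  unfold ordInf at h
  refine ⟨f.num.leadingCoeff / f.denom.leadingCoeff,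
    div_ne_zero (Polynomial.leadingCoeff_ne_zero.2 (num_ne_zero hf))
      (Polynomial.leadingCoeff_ne_zero.2 (denom_ne_zero f)), ?_⟩
  rw [evalInf, if_neg (by omega), if_pos (by omega)]

/-- At infinity: negative order means `f(∞) = ∞` with local degree `-ordInf`. -/
theorem fmap_locDeg_infty_of_neg {f : RatFunc ℂ} (hf : f ≠ 0) (h : ordInf f < 0) :
    fmap f ∞ = ∞ ∧ locDeg f ∞ = (-ordInf f).toNat := by
  obtain ⟨hB0, hBord⟩ := compInf_spec hf
  have hpos : 0 < ordAt 0 (comp (RatFunc.X)⁻¹ (comp f (RatFunc.X)⁻¹)) := by omega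
  obtain ⟨_, hloc⟩ := fmap_locDeg_of_pos hB0 hpos
  refine ⟨by rw [fmap_infty, evalInf_of_neg h], ?_⟩
  rw [locDeg_infty, hloc, hBord]

theorem fmap_locDeg_infty_of_pos {f : RatFunc ℂ} (hf : f ≠ 0) (h : 0 < ordInf f) :
    fmap f ∞ = OnePoint.some 0 ∧ locDeg f ∞ = (ordInf f).toNat := by
  obtain ⟨hB0, hBord⟩ := compInf_spec hf
  have hneg : ordAt 0 (comp (RatFunc.X)⁻¹ (comp f (RatFunc.X)⁻¹)) < 0 := by omega
  obtain ⟨_, hloc⟩ := fmap_locDeg_of_neg hB0 hneg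
  refine ⟨by rw [fmap_infty, evalInf_of_pos h], ?_⟩
  rw [locDeg_infty, hloc, hBord]
  omega

theorem natDegree_eq_zero_of_no_root {p : ℂ[X]} (h : ∀ a : ℂ, p.eval a ≠ 0) :
    p.natDegree = 0 := by
  by_contra hd
  obtain ⟨x, hx⟩ := IsAlgClosed.exists_root p (fun hdeg =>
    hd (Polynomial.natDegree_eq_zero_iff_degree_le_zero.2 (le_of_eq hdeg)))
  exact h x hx

theorem eq_C_of_ordAt_eq_zero {f : RatFunc ℂ} (hf : f ≠ 0) (h : ∀ a : ℂ, ordAt a f = 0) :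
    ∃ c : ℂ, c ≠ 0 ∧ f = RatFunc.C c := by
  have hnum : ∀ a : ℂ, f.num.eval a ≠ 0 := fun a ha => by
    have := (num_eval_zero_iff hf a).1 ha
    rw [h a] at this; exact lt_irrefl 0 this
  have hden : ∀ a : ℂ, f.denom.eval a ≠ 0 := fun a ha => by
    have := (denom_eval_zero_iff hf a).1 ha
    rw [h a] at this; exact lt_irrefl 0 this
  obtain ⟨c, hc⟩ := Polynomial.natDegree_eq_zero.1 (natDegree_eq_zero_of_no_root hnum)
  have hden1 : f.denom = 1 :=
    (Polynomial.Monic.natDegree_eq_zero (RatFunc.monic_denom f)).1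
      (natDegree_eq_zero_of_no_root hden)
  have hc0 : c ≠ 0 := by
    rintro rfl
    exact num_ne_zero hf (by simp [← hc])
  refine ⟨c, hc0, ?_⟩
  rw [← RatFunc.num_div_denom f, ← hc, hden1, map_one, div_one]
  rfl

theorem ne_zero_of_one_le_deg {f : RatFunc ℂ} (h : 1 ≤ deg f) : f ≠ 0 := by
  rintro rfl
  rw [deg] at h
  simp at h

theorem ordAt_XrRn (r n : ℕ) {R : RatFunc ℂ} (hR : R ≠ 0) (a : ℂ) :
    ordAt a (RatFunc.X ^ r * R ^ n)
      = (if a = 0 then (r : ℤ) else 0) + n * ordAt a R := by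
  rw [ordAt_mul a (pow_ne_zero _ RatFunc.X_ne_zero) (pow_ne_zero _ hR),
    ordAt_pow a RatFunc.X_ne_zero, ordAt_pow a hR, ordAt_X]
  rcases eq_or_ne a 0 with rfl | ha
  · simp
  · simp [ha]

@[simp] theorem ordInf_X : ordInf (RatFunc.X : RatFunc ℂ) = -1 := by
  simp [ordInf]

theorem ordInf_XrRn (r n : ℕ) {R : RatFunc ℂ} (hR : R ≠ 0) :
    ordInf (RatFunc.X ^ r * R ^ n) = -(r : ℤ) + n * ordInf R := by
  rw [ordInf_mul (pow_ne_zero _ RatFunc.X_ne_zero) (pow_ne_zero _ hR),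
    ordInf_pow RatFunc.X_ne_zero, ordInf_pow hR, ordInf_X]
  ring

theorem gcd_shift (r k : ℤ) (n : ℕ) : Int.gcd (r + n * k) n = Int.gcd r n := by
  apply Nat.dvd_antisymm
  · apply Int.dvd_gcd
    · have h1 : (Int.gcd (r + n * k) n : ℤ) ∣ r + n * k := Int.gcd_dvd_left _ _
      have h2 : (Int.gcd (r + n * k) n : ℤ) ∣ (n : ℤ) := Int.gcd_dvd_right _ _
      have := h1.sub (h2.mul_right k)
      simpa using this
    · exact Int.gcd_dvd_right _ _
  · apply Int.dvd_gcd
    · have h2 : (Int.gcd r (n:ℤ) : ℤ) ∣ (n:ℤ) := Int.gcd_dvd_right _ _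
      exact (Int.gcd_dvd_left _ _).add (h2.mul_right k)
    · exact Int.gcd_dvd_right _ _

theorem r_add_mul_ne_zero {n r : ℕ} (hr1 : 1 ≤ r) (hrn : r < n) (k : ℤ) :
    (r : ℤ) + n * k ≠ 0 := by
  intro h
  rcases le_or_gt 0 k with hk | hk
  · nlinarith [mul_nonneg (by positivity : (0:ℤ) ≤ (n:ℤ)) hk]
  · have hk1 : k ≤ -1 := by omega
    have hn1 : (r : ℤ) < n := by exact_mod_cast hrn
    nlinarith [mul_le_mul_of_nonneg_left hk1 (by positivity : (0:ℤ) ≤ (n:ℤ))]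

theorem gcd_natAbs_eq_one {n r : ℕ} (hg : Nat.gcd r n = 1) (k : ℤ) (e : ℤ)
    (he : e = (r:ℤ) + n * k ∨ e = -(r:ℤ) + n * k) :
    Nat.gcd e.natAbs n = 1 := by
  have h0 : Nat.gcd e.natAbs n = Int.gcd e n := by
    rw [Int.gcd]; simp
  rcases he with rfl | rfl
  · rw [h0, gcd_shift, Int.gcd_natCast_natCast, hg]
  · rw [h0, gcd_shift, show (-(r:ℤ)) = -(r:ℤ) from rfl, Int.neg_gcd,
      Int.gcd_natCast_natCast, hg]

theorem gcd_mul_self_right (n t : ℕ) : Nat.gcd (n * t) n = n := by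
  rw [Nat.gcd_comm]
  exact Nat.gcd_mul_right_right t n

theorem isMinHolo_of_form {n r : ℕ} (_hn : 2 ≤ n) (hr1 : 1 ≤ r) (hrn : r < n)
    (hg : Nat.gcd r n = 1) {R : RatFunc ℂ} (hR : R ≠ 0) (ν : CP1 → ℕ)
    (hν : ∀ z : CP1, ν z = if z = ((0 : ℂ) : CP1) ∨ z = ∞ then n else 1) :
    IsMinHoloBetween (RatFunc.X ^ r * R ^ n) ν ν := by
  set A : RatFunc ℂ := RatFunc.X ^ r * R ^ n with hAdef
  have hA0 : A ≠ 0 := mul_ne_zero (pow_ne_zero _ RatFunc.X_ne_zero) (pow_ne_zero _ hR)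
  have hν0 : ν (OnePoint.some (0:ℂ)) = n := by rw [hν]; exact if_pos (Or.inl rfl)
  have hνinf : ν ∞ = n := by rw [hν]; exact if_pos (Or.inr rfl)
  have hν1 : ∀ c : ℂ, c ≠ 0 → ν (OnePoint.some c) = 1 := by
    intro c hc
    rw [hν, if_neg]
    rintro (h | h)
    · exact hc (by exact_mod_cast h)
    · exact OnePoint.coe_ne_infty c h
  intro z
  induction z using OnePoint.rec with
  | coe a =>
    have hord : ordAt a A = (if a = 0 then (r : ℤ) else 0) + n * ordAt a R :=
      ordAt_XrRn r n hR a
    show ν (fmap A (OnePoint.some a)) =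
      ν (OnePoint.some a) * Nat.gcd (locDegFin A a) (ν (fmap A (OnePoint.some a)))
    rcases lt_trichotomy (ordAt a A) 0 with h | h | h
    · obtain ⟨hf, hl⟩ := fmap_locDeg_of_neg hA0 h
      rw [hf, hl, hνinf]
      rcases eq_or_ne a 0 with rfl | ha
      · rw [if_pos rfl] at hord
        rw [hν0, show (-ordAt 0 A).toNat = (ordAt 0 A).natAbs by omega,
          gcd_natAbs_eq_one hg (ordAt 0 R) _ (Or.inl hord), mul_one]
      · rw [if_neg ha, zero_add] at hord
        rw [hν1 a ha, one_mul,
          show (-ordAt a A).toNat = (ordAt a A).natAbs by omega, hord]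
        rw [Int.natAbs_mul, Int.natAbs_natCast, gcd_mul_self_right]
    · obtain ⟨c, hc, hf⟩ := fmap_of_zero hA0 h
      have ha : a ≠ 0 := by
        rintro rfl
        rw [if_pos rfl] at hord
        exact r_add_mul_ne_zero hr1 hrn (ordAt 0 R) (by omega)
      rw [hf, hν1 c hc, hν1 a ha, Nat.gcd_one_right, mul_one]
    · obtain ⟨hf, hl⟩ := fmap_locDeg_of_pos hA0 h
      rw [hf, hl, hν0]
      rcases eq_or_ne a 0 with rfl | ha
      · rw [if_pos rfl] at hord
        rw [hν0, show (ordAt 0 A).toNat = (ordAt 0 A).natAbs by omega,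
          gcd_natAbs_eq_one hg (ordAt 0 R) _ (Or.inl hord), mul_one]
      · rw [if_neg ha, zero_add] at hord
        rw [hν1 a ha, one_mul,
          show (ordAt a A).toNat = (ordAt a A).natAbs by omega, hord]
        rw [Int.natAbs_mul, Int.natAbs_natCast, gcd_mul_self_right]
  | infty =>
    have hord : ordInf A = -(r:ℤ) + n * ordInf R := ordInf_XrRn r n hR
    show ν (fmap A ∞) = ν ∞ * Nat.gcd (locDeg A ∞) (ν (fmap A ∞))
    have hne : ordInf A ≠ 0 := by
      rw [hord]
      intro h
      exact r_add_mul_ne_zero hr1 hrn (-(ordInf R)) (by linear_combination -h)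
    rcases lt_trichotomy (ordInf A) 0 with h | h | h
    · obtain ⟨hf, hl⟩ := fmap_locDeg_infty_of_neg hA0 h
      rw [hf, hl, hνinf, show (-ordInf A).toNat = (ordInf A).natAbs by omega,
        gcd_natAbs_eq_one hg (ordInf R) _ (Or.inr hord), mul_one]
    · exact absurd h hne
    · obtain ⟨hf, hl⟩ := fmap_locDeg_infty_of_pos hA0 h
      rw [hf, hl, hνinf, hν0, show (ordInf A).toNat = (ordInf A).natAbs by omega,
        gcd_natAbs_eq_one hg (ordInf R) _ (Or.inr hord), mul_one]

theorem ordAt_prod (b : ℂ) (S : Finset ℂ) (F : ℂ → RatFunc ℂ) (hF : ∀ a ∈ S, F a ≠ 0) :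
    ordAt b (∏ a ∈ S, F a) = ∑ a ∈ S, ordAt b (F a) := by
  classical
  induction S using Finset.cons_induction with
  | empty => simp
  | cons a s ha ih =>
      rw [Finset.prod_cons, Finset.sum_cons,
        ordAt_mul b (hF a (Finset.mem_cons_self a s))
          (Finset.prod_ne_zero_iff.2 fun x hx => hF x (Finset.mem_cons_of_mem hx)),
        ih (fun x hx => hF x (Finset.mem_cons_of_mem hx))]

theorem XsubC_ne_zero (a : ℂ) : RatFunc.X - RatFunc.C a ≠ 0 := by
  rw [show RatFunc.X - RatFunc.C a
      = algebraMap ℂ[X] (RatFunc ℂ) (Polynomial.X - Polynomial.C a) by rw [map_sub]; rfl]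
  exact RatFunc.algebraMap_ne_zero (Polynomial.X_sub_C_ne_zero a)

theorem ordAt_XsubC (b a : ℂ) :
    ordAt b (RatFunc.X - RatFunc.C a) = if b = a then 1 else 0 := by
  rw [show RatFunc.X - RatFunc.C a
      = algebraMap ℂ[X] (RatFunc ℂ) (Polynomial.X - Polynomial.C a) by rw [map_sub]; rfl,
    ordAt_algebraMap b (Polynomial.X_sub_C_ne_zero a)]
  rcases eq_or_ne b a with rfl | hb
  · rw [if_pos rfl, Polynomial.rootMultiplicity_X_sub_C_self]; rfl
  · rw [if_neg hb, Polynomial.rootMultiplicity_eq_zero (by simp [Polynomial.IsRoot, sub_eq_zero, hb])]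
    rfl

theorem eq_one_of_self_eq_mul {n g : ℕ} (hn : 0 < n) (h : n = n * g) : g = 1 :=
  (Nat.eq_of_mul_eq_mul_left hn (by omega : n * 1 = n * g)).symm

theorem form_of_isMinHolo {n : ℕ} (hn : 2 ≤ n) {ν : CP1 → ℕ}
    (hν : ∀ z : CP1, ν z = if z = ((0 : ℂ) : CP1) ∨ z = ∞ then n else 1)
    {A : RatFunc ℂ} (hA0 : A ≠ 0) (h : IsMinHoloBetween A ν ν) :
    ∃ (R : RatFunc ℂ) (r : ℕ), 1 ≤ r ∧ r ≤ n - 1 ∧ Nat.gcd r n = 1 ∧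
      A = RatFunc.X ^ r * R ^ n := by
  classical
  have hν0 : ν (OnePoint.some (0:ℂ)) = n := by rw [hν]; exact if_pos (Or.inl rfl)
  have hνinf : ν ∞ = n := by rw [hν]; exact if_pos (Or.inr rfl)
  have hν1 : ∀ c : ℂ, c ≠ 0 → ν (OnePoint.some c) = 1 := by
    intro c hc
    rw [hν, if_neg]
    rintro (hh | hh)
    · exact hc (by exact_mod_cast hh)
    · exact OnePoint.coe_ne_infty c hh
  -- conditions at 0
  set e : ℤ := ordAt 0 A with he_def
  have he0 : e ≠ 0 := by
    intro he
    obtain ⟨c, hc, hf⟩ := fmap_of_zero hA0 he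
    have h0 := h (OnePoint.some 0)
    rw [hf, hν1 c hc, hν0, Nat.gcd_one_right, mul_one] at h0
    omega
  have hgcd0 : Nat.gcd e.natAbs n = 1 := by
    have h0 := h (OnePoint.some 0)
    rcases lt_trichotomy e 0 with hlt | hz | hgt
    · obtain ⟨hf, hl⟩ := fmap_locDeg_of_neg hA0 hlt
      rw [hf, hνinf, hν0, locDeg_some, hl] at h0
      have h1 : Nat.gcd (-e).toNat n = 1 := eq_one_of_self_eq_mul (by omega) h0
      rwa [show (-e).toNat = e.natAbs by omega] at h1
    · exact absurd hz he0
    · obtain ⟨hf, hl⟩ := fmap_locDeg_of_pos hA0 hgt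
      rw [hf, hν0, locDeg_some, hl] at h0
      have h1 : Nat.gcd e.toNat n = 1 := eq_one_of_self_eq_mul (by omega) h0
      rwa [show e.toNat = e.natAbs by omega] at h1
  -- conditions elsewhere
  have hdvd : ∀ a : ℂ, a ≠ 0 → (n : ℤ) ∣ ordAt a A := by
    intro a ha
    have h0 := h (OnePoint.some a)
    rcases lt_trichotomy (ordAt a A) 0 with hlt | hz | hgt
    · obtain ⟨hf, hl⟩ := fmap_locDeg_of_neg hA0 hlt
      rw [hf, hνinf, hν1 a ha, locDeg_some, hl, one_mul] at h0
      have : n ∣ (-ordAt a A).toNat := h0 ▸ Nat.gcd_dvd_left _ _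
      have h2 : (n:ℤ) ∣ ((-ordAt a A).toNat : ℤ) := Int.natCast_dvd_natCast.2 this
      rw [show ((-ordAt a A).toNat : ℤ) = -(ordAt a A) by omega] at h2
      exact (dvd_neg.1 h2)
    · rw [hz]; exact dvd_zero _
    · obtain ⟨hf, hl⟩ := fmap_locDeg_of_pos hA0 hgt
      rw [hf, hν0, hν1 a ha, locDeg_some, hl, one_mul] at h0
      have : n ∣ (ordAt a A).toNat := h0 ▸ Nat.gcd_dvd_left _ _
      have h2 : (n:ℤ) ∣ ((ordAt a A).toNat : ℤ) := Int.natCast_dvd_natCast.2 this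
      rwa [show ((ordAt a A).toNat : ℤ) = ordAt a A by omega] at h2
  -- define r
  have hnz : (n : ℤ) ≠ 0 := by positivity
  have hmodn : 0 ≤ e % n ∧ e % n < n :=
    ⟨Int.emod_nonneg e hnz, Int.emod_lt_of_pos e (by positivity)⟩
  set r : ℕ := (e % n).toNat with hr_def
  have hr_eq : (r : ℤ) = e % n := by omega
  have hrn : r < n := by omega
  have hediv : e % n = e - n * (e / n) := by
    rw [Int.emod_def]
  have hgcdr : Nat.gcd r n = 1 := by
    have h1 : Int.gcd (e % n) (n:ℤ) = Int.gcd e n := by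
      rw [show e % n = e + (n:ℤ) * (-(e / n)) by rw [hediv]; ring, gcd_shift]
    have h2 : Nat.gcd r n = Int.gcd (e % n) (n:ℤ) := by
      rw [Int.gcd, show ((n:ℤ)).natAbs = n by omega, show (e % n).natAbs = r by omega]
    rw [h2, h1, Int.gcd, show ((n:ℤ)).natAbs = n by omega]
    exact hgcd0
  have hr1 : 1 ≤ r := by
    by_contra hr0
    have : e % n = 0 := by omega
    have hd : (n:ℤ) ∣ e := Int.dvd_of_emod_eq_zero this
    have : (n:ℤ) ∣ (Int.gcd e n : ℤ) := Int.natCast_dvd_natCast.2 (Int.dvd_gcd hd dvd_rfl)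
    rw [show (Int.gcd e (n:ℤ)) = 1 by rw [Int.gcd, show ((n:ℤ)).natAbs = n by omega]; exact hgcd0]
      at this
    have : (n:ℤ) ≤ 1 := Int.le_of_dvd one_pos this
    omega
  -- the support finset
  set S : Finset ℂ := (A.num * A.denom).roots.toFinset with hS_def
  have hnd0 : A.num * A.denom ≠ 0 := mul_ne_zero (num_ne_zero hA0) (denom_ne_zero A)
  have hS : ∀ a : ℂ, a ∉ S → ordAt a A = 0 := by
    intro a haS
    have hroot : ¬ (A.num * A.denom).IsRoot a := by
      intro hr
      exact haS (Multiset.mem_toFinset.2 ((Polynomial.mem_roots hnd0).2 hr))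
    rw [Polynomial.IsRoot, Polynomial.eval_mul] at hroot
    have h1 : A.num.eval a ≠ 0 := fun hh => hroot (by rw [hh, zero_mul])
    have h2 : A.denom.eval a ≠ 0 := fun hh => hroot (by rw [hh, mul_zero])
    unfold ordAt
    rw [Polynomial.rootMultiplicity_eq_zero h1, Polynomial.rootMultiplicity_eq_zero h2]
    ring
  have hS0 : (0:ℂ) ∈ S := by
    by_contra hnot
    exact he0 (hS 0 hnot)
  -- the root function
  set m : ℂ → ℤ := fun a => if a = 0 then (e - r) / n else ordAt a A / n with hm_def
  set R0 : RatFunc ℂ := ∏ a ∈ S, (RatFunc.X - RatFunc.C a) ^ m a with hR0_def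
  have hR0 : R0 ≠ 0 :=
    Finset.prod_ne_zero_iff.2 fun a _ => zpow_ne_zero _ (XsubC_ne_zero a)
  have hordR0 : ∀ b : ℂ, ordAt b R0 = if b ∈ S then m b else 0 := by
    intro b
    rw [hR0_def, ordAt_prod b S _ (fun a _ => zpow_ne_zero _ (XsubC_ne_zero a))]
    have hterm : ∀ a ∈ S, ordAt b ((RatFunc.X - RatFunc.C a) ^ m a)
        = if a = b then m a else 0 := by
      intro a _
      rw [ordAt_zpow b (XsubC_ne_zero a), ordAt_XsubC b a]
      rcases eq_or_ne a b with rfl | hab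
      · simp
      · rw [if_neg (fun hh => hab hh.symm), if_neg hab, mul_zero]
    rw [Finset.sum_congr rfl hterm, Finset.sum_ite_eq' S b m]
  -- main divisor computation
  have hW0 : (RatFunc.X : RatFunc ℂ) ^ r * R0 ^ n ≠ 0 :=
    mul_ne_zero (pow_ne_zero _ RatFunc.X_ne_zero) (pow_ne_zero _ hR0)
  have hkey : ∀ b : ℂ, ordAt b (RatFunc.X ^ r * R0 ^ n) = ordAt b A := by
    intro b
    rw [ordAt_XrRn r n hR0 b, hordR0 b]
    rcases eq_or_ne b 0 with rfl | hb
    · rw [if_pos rfl, if_pos hS0]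
      have hm0 : m 0 = (e - (r:ℤ)) / (n:ℤ) := by simp [hm_def]
      have hdd : e - (r:ℤ) = n * (e / n) := by omega
      rw [hm0, hdd, Int.mul_ediv_cancel_left _ hnz]
      omega
    · rw [if_neg hb]
      by_cases hbS : b ∈ S
      · rw [if_pos hbS]
        have hmb : m b = ordAt b A / (n:ℤ) := by simp [hm_def, hb]
        rw [hmb, Int.mul_ediv_cancel' (hdvd b hb)]
        ring
      · rw [if_neg hbS, hS b hbS, mul_zero]
        ring
  -- the ratio is a nonzero constant
  have hg0 : A * (RatFunc.X ^ r * R0 ^ n)⁻¹ ≠ 0 := mul_ne_zero hA0 (inv_ne_zero hW0)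
  have hgord : ∀ b : ℂ, ordAt b (A * (RatFunc.X ^ r * R0 ^ n)⁻¹) = 0 := by
    intro b
    rw [ordAt_mul b hA0 (inv_ne_zero hW0), ordAt_inv b hW0, hkey b]
    ring
  obtain ⟨c0, hc0, hgC⟩ := eq_C_of_ordAt_eq_zero hg0 hgord
  obtain ⟨c, hc⟩ := IsAlgClosed.exists_pow_nat_eq c0 (by omega : 0 < n)
  refine ⟨RatFunc.C c * R0, r, hr1, by omega, hgcdr, ?_⟩
  have hA_eq : A = RatFunc.C c0 * (RatFunc.X ^ r * R0 ^ n) := by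
    rw [← hgC]
    field_simp
    exact (div_self (pow_ne_zero _ RatFunc.X_ne_zero)).symm
  rw [hA_eq, mul_pow, ← map_pow, hc]
  ring

end Aux8

open Pk in
/-- Let `n ≥ 2` and let `O` be the orbifold with `ν(0) = ν(∞) = n` and
`ν(z) = 1` otherwise. A non-constant rational function `A` is a minimal holomorphic map
`A : O → O` iff `A = z^r·R(z)^n` for some rational `R` and some `1 ≤ r ≤ n-1` with
`gcd(r,n) = 1`. -/
theorem statement8 (n : ℕ) (hn : 2 ≤ n) (ν : CP1 → ℕ)
    (hν : ∀ z : CP1, ν z = if z = ((0 : ℂ) : CP1) ∨ z = ∞ then n else 1)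
    (A : RatFunc ℂ) (hA : 1 ≤ deg A) :
    IsMinHoloBetween A ν ν ↔
      ∃ (R : RatFunc ℂ) (r : ℕ), 1 ≤ r ∧ r ≤ n - 1 ∧ Nat.gcd r n = 1 ∧
        A = RatFunc.X ^ r * R ^ n := by
  have hA0 : A ≠ 0 := Aux8.ne_zero_of_one_le_deg hA
  constructor
  · intro h
    exact Aux8.form_of_isMinHolo hn hν hA0 h
  · rintro ⟨R, r, hr1, hr2, hg, rfl⟩
    have hR : R ≠ 0 := by
      rintro rfl
      exact hA0 (by rw [zero_pow (by omega : n ≠ 0), mul_zero])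
    exact Aux8.isMinHolo_of_form hn hr1 (by omega) hg hR ν hν
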